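/- Let (A, m) be a complete local Noetherian ring, X a Noetherian A-scheme, and (J_i) a system of quasi-coherent sheaves on X_i = X ⊗_A A/m^{i+1} with J_i ⊗ A/m^{j+1} ≅ J_j for j ≤ i. Then the inverse limit sheaf J = lim← J_i on the formal completion satisfies J ⊗ O_{X_i} ≅ J_i for all i. (Algebraic version: for B a flat A-algebra of finite type, the limit M = lim← M_i of a compatible system of B/m^{i+1}B-modules satisfies M ⊗_B B/m^{i+1}B ≅ M_i.) -/

import Mathlib

/-- The inverse limit of an `ℕ`-indexed system of modules with transition maps
`f i : M (i+1) → M i`, realized as the submodule of compatible sequences in the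
product. -/
def invLimit {R : Type*} [CommRing R] {M : ℕ → Type*}
    [∀ i, AddCommGroup (M i)] [∀ i, Module R (M i)]
    (f : ∀ i, M (i + 1) →ₗ[R] M i) : Submodule R (∀ i, M i) where
  carrier := {x | ∀ i, f i (x (i + 1)) = x i}
  add_mem' := by intro a b ha hb i; simp [ha i, hb i]
  zero_mem' := by intro i; simp
  smul_mem' := by intro c a ha i; simp [ha i]

section Aux

variable {R : Type*} [CommRing R] {M : ℕ → Type*}
    [∀ i, AddCommGroup (M i)] [∀ i, Module R (M i)]

/-- Cast along an equality of indices. -/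
def mcast (R : Type*) [CommRing R] [∀ i, Module R (M i)] {p q : ℕ} (h : p = q) : M p →ₗ[R] M q := h ▸ LinearMap.id

lemma mcast_self {p : ℕ} (h : p = p) (b : M p) : mcast R h b = b := rfl

lemma mcast_mcast {p q s : ℕ} (h1 : p = q) (h2 : q = s) (b : M p) :
    mcast R h2 (mcast R h1 b) = mcast R (h1.trans h2) b := by subst h1; subst h2; rfl

variable (f : ∀ i, M (i + 1) →ₗ[R] M i)

lemma mcast_f {p q : ℕ} (h : p = q) (h' : p + 1 = q + 1) (b : M (p + 1)) :
    f q (mcast R h' b) = mcast R h (f p b) := by subst h; rfl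

/-- Iterated pushdown map `M (l+k) → M l`. -/
def pd : ∀ (k l : ℕ), M (l + k) →ₗ[R] M l
  | 0, _ => LinearMap.id
  | (k+1), l => pd k l ∘ₗ f (l + k)

lemma f_pd (k p : ℕ) (h : p + (k+1) = (p+1) + k) (b : M (p + (k+1))) :
    f p (pd f k (p+1) (mcast R h b)) = pd f (k+1) p b := by
  induction k with
  | zero => rw [mcast_self]; rfl
  | succ k ih =>
      have h0 : p + (k+1) = (p+1) + k := by omega
      show f p (pd f k (p+1) (f ((p+1)+k) (mcast R h b))) = pd f (k+1) p (f (p + (k+1)) b)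
      exact (congrArg (fun z => (f p) ((pd f k (p+1)) z)) (mcast_f f h0 h b)).trans
        (ih h0 (f (p + (k+1)) b))

/-- Lifting lemma: given a system of submodules `N l` stable under the
transition maps and with surjective transitions, any element of `N j` lifts to a
compatible sequence lying in all the `N l`. -/
lemma exists_lift (N : ∀ l, Submodule R (M l))
    (hNmap : ∀ l, ∀ b ∈ N (l+1), f l b ∈ N l)
    (hNsurj : ∀ l, ∀ b ∈ N l, ∃ c ∈ N (l+1), f l c = b)
    (j : ℕ) (a : M j) (ha : a ∈ N j) :
    ∃ x : ∀ l, M l, (∀ l, f l (x (l+1)) = x l) ∧ (∀ l, x l ∈ N l) ∧ x j = a := by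
  choose σ hσmem hσf using hNsurj
  -- chain upward from level j
  let c : ∀ k, {v : M (j + k) // v ∈ N (j + k)} := fun k =>
    Nat.rec ⟨a, ha⟩ (fun k ih => ⟨σ (j+k) ih.1 ih.2, hσmem (j+k) ih.1 ih.2⟩) k
  have hchain : ∀ k, f (j+k) (c (k+1)).1 = (c k).1 := fun k => hσf (j+k) (c k).1 (c k).2
  have hpdmem : ∀ k l, ∀ b ∈ N (l + k), pd f k l b ∈ N l := by
    intro k
    induction k with
    | zero => intro l b hb; exact hb
    | succ k ih => intro l b hb; exact ih l (f (l+k) b) (hNmap (l+k) b hb)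
  have hmcastmem : ∀ {p q : ℕ} (h : p = q) (b : M p), b ∈ N p → mcast R h b ∈ N q := by
    intro p q h b hb; subst h; exact hb
  refine ⟨fun l => pd f j l (mcast R (show j + l = l + j by omega) (c l).1), ?_, ?_, ?_⟩
  · intro l
    have h1 : j + (l+1) = (l+1) + j := by omega
    have h2 : j + (l+1) = l + (j+1) := by omega
    have h3 : l + (j+1) = (l+1) + j := by omega
    have h0 : j + l = l + j := by omega
    calc f l (pd f j (l+1) (mcast R h1 (c (l+1)).1))
        = f l (pd f j (l+1) (mcast R h3 (mcast R h2 (c (l+1)).1))) := by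
          rw [mcast_mcast]
      _ = pd f (j+1) l (mcast R h2 (c (l+1)).1) := f_pd f j l h3 _
      _ = pd f j l (f (l+j) (mcast R h2 (c (l+1)).1)) := rfl
      _ = pd f j l (mcast R h0 (f (j+l) (c (l+1)).1)) := congrArg (pd f j l) (mcast_f f h0 h2 _)
      _ = pd f j l (mcast R h0 (c l).1) := by rw [hchain l]
  · intro l
    exact hpdmem j l _ (hmcastmem _ _ (c l).2)
  · have key : ∀ k, pd f k j (c k).1 = a := by
      intro k
      induction k with
      | zero => rfl
      | succ k ih =>
          show pd f k j (f (j+k) (c (k+1)).1) = a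
          rw [hchain k]; exact ih
    exact key j

/-- If a compatible sequence vanishes at some level, it vanishes at all lower levels. -/
lemma downzero (x : ∀ l, M l) (hc : ∀ l, f l (x (l+1)) = x l) :
    ∀ k l, x (l + k) = 0 → x l = 0 := by
  intro k
  induction k with
  | zero => intro l h; exact h
  | succ k ih =>
      intro l h
      have h' : x (l + k + 1) = 0 := h
      have : x (l + k) = 0 := by
        rw [← hc (l + k), h', map_zero]
      exact ih l this

end Aux

/-- Expressing elements of `span(range t) • Q` as finite combinations. -/
lemma lemG {B W : Type*} [CommRing B] [AddCommGroup W] [Module B W] {r : ℕ}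
    (t : Fin r → B) (Q : Submodule B W) (x : W)
    (hx : x ∈ Ideal.span (Set.range t) • Q) :
    ∃ z : Fin r → W, (∀ k, z k ∈ Q) ∧ x = ∑ k, t k • z k := by
  refine Submodule.smul_induction_on hx ?_ ?_
  · intro b hb q hq
    obtain ⟨c, hc⟩ := (Submodule.mem_span_range_iff_exists_fun B).mp hb
    refine ⟨fun k => c k • q, fun k => Q.smul_mem _ hq, ?_⟩
    rw [← hc, Finset.sum_smul]
    refine Finset.sum_congr rfl fun k _ => ?_
    rw [smul_eq_mul, mul_comm, mul_smul]
  · rintro u v ⟨zu, hu, hu'⟩ ⟨zv, hv, hv'⟩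
    refine ⟨zu + zv, fun k => Q.add_mem (hu k) (hv k), ?_⟩
    rw [hu', hv', ← Finset.sum_add_distrib]
    refine Finset.sum_congr rfl fun k _ => ?_
    rw [Pi.add_apply, smul_add]


/-- algebraic version.  Let `A` be a Noetherian ring with an
ideal `m`, `B` an `A`-algebra, and `(M i)` a compatible system of
`B/m^(i+1)B`-modules (surjective `B`-linear transition maps `f i` with kernel
`m^(i+1)B • M (i+1)`, each `M i` killed by `m^(i+1)B`).  Then the inverse
limit `M = lim← M i` satisfies `M ⊗_B B/m^(i+1)B ≅ M i`: the projection
`M → M i` is surjective with kernel `m^(i+1)B • M`. -/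
theorem stmt12 {A : Type*} [CommRing A] [IsNoetherianRing A] (m : Ideal A)
    {B : Type*} [CommRing B] [Algebra A B]
    {M : ℕ → Type*} [∀ i, AddCommGroup (M i)] [∀ i, Module B (M i)]
    (f : ∀ i, M (i + 1) →ₗ[B] M i)
    (htor : ∀ i, ∀ b ∈ Ideal.map (algebraMap A B) (m ^ (i + 1)), ∀ x : M i, b • x = 0)
    (hsurj : ∀ i, Function.Surjective (f i))
    (hker : ∀ i, LinearMap.ker (f i) =
      Ideal.map (algebraMap A B) (m ^ (i + 1)) • (⊤ : Submodule B (M (i + 1)))) :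
    ∀ i, Function.Surjective ((LinearMap.proj i) ∘ₗ (invLimit f).subtype) ∧
      LinearMap.ker ((LinearMap.proj i) ∘ₗ (invLimit f).subtype) =
        Ideal.map (algebraMap A B) (m ^ (i + 1)) •
          (⊤ : Submodule B ↥(invLimit f)) := by
  intro i
  constructor
  · -- surjectivity
    intro a
    obtain ⟨x, hx, -, hxj⟩ := exists_lift f (fun _ => ⊤) (fun _ b _ => trivial)
      (fun l b _ => ⟨(hsurj l b).choose, trivial, (hsurj l b).choose_spec⟩) i a trivial
    exact ⟨⟨x, hx⟩, hxj⟩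
  · apply le_antisymm
    · -- hard direction
      intro y hy
      have hyc : ∀ l, f l (y.val (l+1)) = y.val l := y.2
      have hyi : y.val i = 0 := hy
      have hy0 : ∀ l, l ≤ i → y.val l = 0 := by
        intro l hl
        obtain ⟨k, rfl⟩ := Nat.exists_eq_add_of_le hl
        exact downzero f y.val hyc k l hyi
      obtain ⟨r, t, ht⟩ := Submodule.fg_iff_exists_fin_generating_family.mp
        (Ideal.FG.map (IsNoetherian.noetherian (m ^ (i+1))) (algebraMap A B))
      have hvanish : ∀ l s : ℕ, l + 1 ≤ s → ∀ v : M l,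
          v ∈ Ideal.map (algebraMap A B) (m ^ s) • (⊤ : Submodule B (M l)) → v = 0 := by
        intro l s hls v hv
        refine Submodule.smul_induction_on hv ?_ ?_
        · intro b hb n _
          exact htor l b (Ideal.map_mono (Ideal.pow_le_pow_right hls) hb) n
        · intro u v hu hv; rw [hu, hv, add_zero]
      -- the key approximation step
      have hstep : ∀ s : ℕ, ∀ z : ↥(invLimit f), (∀ l, l ≤ i + s → z.val l = 0) →
          ∃ w : Fin r → ↥(invLimit f),
            (∀ k l, (w k).val l ∈ Ideal.map (algebraMap A B) (m ^ s) • (⊤ : Submodule B (M l))) ∧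
            (∀ l, l ≤ i + s + 1 → (z - ∑ k, t k • w k).val l = 0) := by
        intro s z hz
        have hzc : ∀ l, f l (z.val (l+1)) = z.val l := z.2
        have hktop : f (i+s) (z.val (i+s+1)) = 0 := (hzc (i+s)).trans (hz (i+s) le_rfl)
        have hmem : z.val (i+s+1) ∈
            Ideal.map (algebraMap A B) (m ^ (i+s+1)) • (⊤ : Submodule B (M (i+s+1))) := by
          rw [← hker (i+s)]
          exact LinearMap.mem_ker.mpr hktop
        have hpow : Ideal.map (algebraMap A B) (m ^ (i+s+1)) =
            Ideal.map (algebraMap A B) (m ^ (i+1)) * Ideal.map (algebraMap A B) (m ^ s) := by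
          rw [show i+s+1 = (i+1)+s by omega, pow_add, Ideal.map_mul]
        rw [hpow, mul_smul, ← ht] at hmem
        obtain ⟨w0, hw0mem, heq⟩ := lemG t _ _ hmem
        set I' := Ideal.map (algebraMap A B) (m ^ s) with hI'
        have hNmap : ∀ l, ∀ b ∈ I' • (⊤ : Submodule B (M (l+1))), f l b ∈ I' • (⊤ : Submodule B (M l)) := by
          intro l b hb
          have h1 := Submodule.mem_map_of_mem (f := f l) hb
          rw [Submodule.map_smul''] at h1
          exact Submodule.smul_mono le_rfl le_top h1
        have hNsurj : ∀ l, ∀ b ∈ I' • (⊤ : Submodule B (M l)),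
            ∃ c ∈ I' • (⊤ : Submodule B (M (l+1))), f l c = b := by
          intro l b hb
          have h1 : (I' • (⊤ : Submodule B (M (l+1)))).map (f l) = I' • ⊤ := by
            rw [Submodule.map_smul'', Submodule.map_top, LinearMap.range_eq_top.mpr (hsurj l)]
          rw [← h1] at hb
          exact Submodule.mem_map.mp hb
        have hlift : ∀ k, ∃ x : ∀ l, M l, (∀ l, f l (x (l+1)) = x l) ∧
            (∀ l, x l ∈ I' • (⊤ : Submodule B (M l))) ∧ x (i+s+1) = w0 k :=
          fun k => exists_lift f _ hNmap hNsurj (i+s+1) (w0 k) (hw0mem k)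
        choose ζ hζc hζm hζv using hlift
        refine ⟨fun k => ⟨ζ k, hζc k⟩, fun k l => hζm k l, ?_⟩
        have hsubc : ∀ l, (z - ∑ k, t k • (⟨ζ k, hζc k⟩ : ↥(invLimit f))).val l
            = z.val l - ∑ k, t k • ζ k l := by
          intro l
          simp [Finset.sum_apply]
        have htopzero : (z - ∑ k, t k • (⟨ζ k, hζc k⟩ : ↥(invLimit f))).val (i+s+1) = 0 := by
          rw [hsubc, heq, sub_eq_zero]
          exact Finset.sum_congr rfl fun k _ => by rw [hζv k]
        intro l hl
        obtain ⟨k', hk'⟩ := Nat.exists_eq_add_of_le hl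
        exact downzero f _ (z - ∑ k, t k • (⟨ζ k, hζc k⟩ : ↥(invLimit f))).2 k' l (hk' ▸ htopzero)
      -- iterate the step
      let G : ∀ s : ℕ, {z : ↥(invLimit f) // ∀ l, l ≤ i + s → z.val l = 0} := fun s =>
        Nat.rec ⟨y, fun l hl => hy0 l hl⟩
          (fun s ih => ⟨ih.1 - ∑ k, t k • Classical.choose (hstep s ih.1 ih.2) k,
            fun l hl => (Classical.choose_spec (hstep s ih.1 ih.2)).2 l hl⟩) s
      set Z : ∀ s : ℕ, Fin r → ↥(invLimit f) :=
        fun s => Classical.choose (hstep s (G s).1 (G s).2) with hZdef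
      have hZmem : ∀ s k l, (Z s k).val l ∈
          Ideal.map (algebraMap A B) (m ^ s) • (⊤ : Submodule B (M l)) :=
        fun s => (Classical.choose_spec (hstep s (G s).1 (G s).2)).1
      have hGsucc : ∀ s, (G (s+1)).1 = (G s).1 - ∑ k, t k • Z s k := fun s => rfl
      have hZc : ∀ s k l, f l ((Z s k).val (l+1)) = (Z s k).val l := fun s k => (Z s k).2
      -- the limit elements
      have hWc : ∀ k : Fin r,
          (fun l => ∑ s ∈ Finset.range (l+1), (Z s k).val l) ∈ invLimit f := by
        intro k l
        show f l (∑ s ∈ Finset.range (l+1+1), (Z s k).val (l+1))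
          = ∑ s ∈ Finset.range (l+1), (Z s k).val l
        rw [map_sum]
        rw [Finset.sum_congr rfl fun s _ => hZc s k l, Finset.sum_range_succ,
          hvanish l (l+1) le_rfl _ (hZmem (l+1) k l), add_zero]
      have hyeq : y = ∑ k, t k • (⟨_, hWc k⟩ : ↥(invLimit f)) := by
        apply Subtype.ext
        funext l
        have hRHS : (∑ k, t k • (⟨_, hWc k⟩ : ↥(invLimit f))).val l
            = ∑ s ∈ Finset.range (l+1), ∑ k, t k • (Z s k).val l := by
          simp only [AddSubmonoidClass.coe_finset_sum, Finset.sum_apply, SetLike.val_smul,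
            Pi.smul_apply, Finset.smul_sum]
          rw [Finset.sum_comm]
        have hterm : ∀ s, ∑ k, t k • (Z s k).val l
            = (G s).1.val l - (G (s+1)).1.val l := by
          intro s
          rw [hGsucc s]
          simp [Finset.sum_apply, sub_sub_cancel]
        rw [hRHS, Finset.sum_congr rfl fun s _ => hterm s, Finset.sum_range_sub',
          (G (l+1)).2 l (by omega), sub_zero]
        rfl
      rw [hyeq]
      exact Submodule.sum_mem _ fun k _ =>
        Submodule.smul_mem_smul (ht ▸ Submodule.subset_span ⟨k, rfl⟩) trivial
    · rw [Submodule.smul_le]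
      intro b hb z _
      have : ((LinearMap.proj i) ∘ₗ (invLimit f).subtype) (b • z) = b • z.val i := rfl
      rw [LinearMap.mem_ker, this, htor i b hb]
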